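/- For every applicant set I, the set of individuals chosen by the EWS-last sequential rule under ρ* but not by the Over-and-Above rule under ρ̊ equals the unique maximal set of individuals who suffer from a violation of the Equality Code under the Over-and-Above rule with ρ̊ for I. -/

import Mathlib

attribute [local instance] Classical.propDecidable

noncomputable section

variable {ι R : Type*} [Fintype ι] [DecidableEq ι] [Fintype R] [DecidableEq R]

/-- Eligibility sets: everyone is eligible for the open category (`none`),
and `elig c` is the set of members of VR-protected category `c`. -/
def eligOf (elig : R → Finset ι) : Option R → Finset ι
  | none => (Finset.univ : Finset ι)
  | some c => elig c

/-- Aggregate choice: all individuals chosen across all categories. -/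
def aggC (C : Finset ι → Option R → Finset ι) (I : Finset ι) : Finset ι :=
  Finset.univ.biUnion fun v => C I v

/-- `C` is a choice rule for capacities `q` and eligibility `elig`: each category chooses
eligible applicants up to capacity, and no individual is chosen by two categories. -/
def IsChoiceRule (q : Option R → ℕ) (elig : R → Finset ι)
    (C : Finset ι → Option R → Finset ι) : Prop :=
  ∀ I : Finset ι,
    (∀ v, C I v ⊆ I ∩ eligOf elig v) ∧
    (∀ v, (C I v).card ≤ q v) ∧
    (∀ v v', v ≠ v' → Disjoint (C I v) (C I v'))

/-- Non-wastefulness: no position remains idle while an eligible applicant is unchosen. -/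
def NonWasteful (q : Option R → ℕ) (elig : R → Finset ι)
    (C : Finset ι → Option R → Finset ι) : Prop :=
  ∀ (I : Finset ι) (v : Option R) (j : ι),
    j ∈ I → j ∉ aggC C I → (C I v).card < q v → j ∉ eligOf elig v

/-- No justified envy: a chosen individual outscores every eligible entirely-unchosen applicant. -/
def NoJustifiedEnvy (σ : ι → ℝ) (elig : R → Finset ι)
    (C : Finset ι → Option R → Finset ι) : Prop :=
  ∀ (I : Finset ι) (v : Option R) (i j : ι),
    i ∈ C I v → j ∈ I → j ∈ eligOf elig v → j ∉ aggC C I → σ j < σ i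

/-- Compliance with VR protections: a VR recipient implies the open category is full, with
every open-category recipient scoring strictly higher. -/
def CompliesVR (σ : ι → ℝ) (q : Option R → ℕ)
    (C : Finset ι → Option R → Finset ι) : Prop :=
  ∀ (I : Finset ι) (c : R) (i : ι), i ∈ C I (some c) →
    (C I none).card = q none ∧ ∀ j ∈ C I none, σ i < σ j

/-- The (at most) `k` highest merit-score members of `S`. -/
def topK (σ : ι → ℝ) (S : Finset ι) (k : ℕ) : Finset ι :=
  S.filter fun i => (S.filter fun j => σ i ≤ σ j).card ≤ k

/-- The Over-and-Above choice rule: open positions go to the top-merit applicants; then each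
VR category's quota is filled by the highest-merit remaining eligible members. -/
def OA (σ : ι → ℝ) (q : Option R → ℕ) (elig : R → Finset ι)
    (I : Finset ι) : Option R → Finset ι
  | none => topK σ I (q none)
  | some c => topK σ ((I \ topK σ I (q none)) ∩ elig c) (q (some c))

/-- The sequential choice rule: categories are processed in the order given by the list,
each filling its positions by serial dictatorship on the remaining eligible applicants. -/
def seqAssign (σ : ι → ℝ) (q : Option R → ℕ) (elig : R → Finset ι) :
    List (Option R) → Finset ι → Option R → Finset ι
  | [], _, _ => ∅
  | v :: rest, I, u =>
    let chosen := topK σ (I ∩ eligOf elig v) (q v)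
    if u = v then chosen else seqAssign σ q elig rest (I \ chosen) u

/-- Eligibility sets induced by a membership profile `ρ`. -/
def eligρ (ρ : ι → Finset R) (c : R) : Finset ι :=
  Finset.univ.filter fun i => c ∈ ρ i

/-- Aggregate outcome of the Over-and-Above rule under membership profile `ρ`. -/
def aggOA (σ : ι → ℝ) (q : Option R → ℕ) (ρ : ι → Finset R) (I : Finset ι) : Finset ι :=
  aggC (OA σ q (eligρ ρ)) I

/-- The profile `(ρ₋ⱼ, ρ̃ⱼ)`: each member of `J` is reassigned membership `{e}` only. -/
def updProf (ρ : ι → Finset R) (e : R) (J : Finset ι) : ι → Finset R :=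
  fun i => if i ∈ J then {e} else ρ i

/-- `J ⊆ 𝒥 ∩ I` suffers from a violation of the Equality Code under the Over-and-Above rule
with profile `ρ` for `I`: every member of `J` is unchosen under `ρ` but chosen once the
members of `J` are reassigned membership `{e}`. -/
def Suffers (σ : ι → ℝ) (q : Option R → ℕ) (ρ : ι → Finset R) (e : R)
    (JJ I J : Finset ι) : Prop :=
  J ⊆ JJ ∩ I ∧ ∀ j ∈ J, j ∉ aggOA σ q ρ I ∧ j ∈ aggOA σ q (updProf ρ e J) I

/-- `J` is a maximal set of individuals suffering from a violation of the Equality Code. -/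
def MaximalSuffers (σ : ι → ℝ) (q : Option R → ℕ) (ρ : ι → Finset R) (e : R)
    (JJ I J : Finset ι) : Prop :=
  J ⊆ (JJ ∩ I) \ aggOA σ q ρ I ∧
  Suffers σ q ρ e JJ I J ∧
  ∀ J' ⊆ (JJ ∩ I) \ aggOA σ q ρ I, J ⊂ J' →
    ¬ Suffers σ q ρ e JJ I J' ∧ J ⊆ aggOA σ q (updProf ρ e J') I

/-- The expanded profile `ρ*`: members of `𝒥` get an additional membership of `e`. -/
def ρstar (ρ : ι → Finset R) (e : R) (JJ : Finset ι) : ι → Finset R :=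
  fun i => if i ∈ JJ then insert e (ρ i) else ρ i

/-- Aggregate outcome of the sequential choice rule under profile `ρ` and the given order. -/
def aggSeq (σ : ι → ℝ) (q : Option R → ℕ) (ρ : ι → Finset R)
    (order : List (Option R)) (I : Finset ι) : Finset ι :=
  Finset.univ.biUnion (seqAssign σ q (eligρ ρ) order I)

/-- The EWS-last order of precedence: open first, caste-based categories (listed by `L`), `e` last. -/
def ewsLastOrder (e : R) (L : List R) : List (Option R) :=
  (none : Option R) :: (L.map some ++ [some e])

-- ===== auxiliary lemmas =====

lemma topK_subset' (σ : ι → ℝ) (S : Finset ι) (k : ℕ) : topK σ S k ⊆ S :=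
  Finset.filter_subset _ _

lemma mem_topK {σ : ι → ℝ} {S : Finset ι} {k : ℕ} {i : ι} :
    i ∈ topK σ S k ↔ i ∈ S ∧ (S.filter fun j => σ i ≤ σ j).card ≤ k :=
  Finset.mem_filter

lemma topK_mono {σ : ι → ℝ} {S T : Finset ι} {k : ℕ} {i : ι}
    (hST : S ⊆ T) (hiS : i ∈ S) (hi : i ∈ topK σ T k) : i ∈ topK σ S k := by
  rw [mem_topK] at hi ⊢
  exact ⟨hiS, le_trans (Finset.card_le_card
    (Finset.filter_subset_filter _ hST)) hi.2⟩

lemma topK_card {σ : ι → ℝ} (hσ : Function.Injective σ) (S : Finset ι) (k : ℕ) :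
    (topK σ S k).card = min S.card k := by
  classical
  set r : ι → ℕ := fun i => (S.filter fun j => σ i ≤ σ j).card with hr
  have h1 : ∀ i ∈ S, 1 ≤ r i := by
    intro i hi
    have : i ∈ S.filter fun j => σ i ≤ σ j := Finset.mem_filter.2 ⟨hi, le_refl _⟩
    exact Finset.card_pos.2 ⟨i, this⟩
  have h2 : ∀ i ∈ S, r i ≤ S.card := fun i _ =>
    Finset.card_le_card (Finset.filter_subset _ _)
  have hinj : Set.InjOn r S := by
    intro a ha b hb hab
    by_contra hne
    have hσne : σ a ≠ σ b := fun h => hne (hσ h)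
    wlog hlt : σ a < σ b generalizing a b
    · exact this hb ha hab.symm (Ne.symm hne) hσne.symm
        (lt_of_le_of_ne (not_lt.1 hlt) hσne.symm)
    have hsub : (S.filter fun j => σ b ≤ σ j) ⊆ (S.filter fun j => σ a ≤ σ j).erase a := by
      intro x hx
      rw [Finset.mem_filter] at hx
      refine Finset.mem_erase.2 ⟨?_, Finset.mem_filter.2 ⟨hx.1, le_trans hlt.le hx.2⟩⟩
      rintro rfl; exact absurd hx.2 (not_le.2 hlt)
    have hle := Finset.card_le_card hsub
    have hmem : a ∈ S.filter fun j => σ a ≤ σ j := Finset.mem_filter.2 ⟨ha, le_refl _⟩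
    rw [Finset.card_erase_of_mem hmem] at hle
    have h1a := h1 a ha
    have hra : r a = (S.filter fun j => σ a ≤ σ j).card := rfl
    have hrb : r b = (S.filter fun j => σ b ≤ σ j).card := rfl
    omega
  have himg : S.image r = Finset.Icc 1 S.card := by
    apply Finset.eq_of_subset_of_card_le
    · intro x hx
      obtain ⟨i, hi, rfl⟩ := Finset.mem_image.1 hx
      exact Finset.mem_Icc.2 ⟨h1 i hi, h2 i hi⟩
    · rw [Nat.card_Icc, Finset.card_image_of_injOn hinj]
      omega
  have hfil : topK σ S k = S.filter fun i => r i ≤ k := rfl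
  have himg2 : (topK σ S k).image r = (S.image r).filter fun x => x ≤ k := by
    rw [hfil]
    ext x
    simp only [Finset.mem_image, Finset.mem_filter]
    constructor
    · rintro ⟨i, hi, rfl⟩
      exact ⟨⟨i, hi.1, rfl⟩, hi.2⟩
    · rintro ⟨⟨i, hi, rfl⟩, hx⟩
      exact ⟨i, ⟨hi, hx⟩, rfl⟩
  have hcard : (topK σ S k).card = ((S.image r).filter fun x => x ≤ k).card := by
    rw [← himg2, Finset.card_image_of_injOn (hinj.mono (by
      intro x hx; exact (topK_subset' σ S k) hx))]
  rw [hcard, himg]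
  have : (Finset.Icc 1 S.card).filter (fun x => x ≤ k) = Finset.Icc 1 (min S.card k) := by
    ext x
    simp only [Finset.mem_filter, Finset.mem_Icc, le_min_iff]
    omega
  rw [this, Nat.card_Icc]
  omega

lemma topK_blocking {σ : ι → ℝ} (hσ : Function.Injective σ) {S : Finset ι} {k : ℕ} {i : ι}
    (hiS : i ∈ S) (hi : i ∉ topK σ S k) :
    (topK σ S k).card = k ∧ ∀ x ∈ topK σ S k, σ i < σ x := by
  have hri : k < (S.filter fun j => σ i ≤ σ j).card := by
    by_contra h
    exact hi (mem_topK.2 ⟨hiS, not_lt.1 h⟩)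
  have h1 : k < S.card :=
    lt_of_lt_of_le hri (Finset.card_le_card (Finset.filter_subset _ _))
  refine ⟨by rw [topK_card hσ]; omega, ?_⟩
  intro x hx
  rw [mem_topK] at hx
  by_contra hle
  push_neg at hle
  have hsub : (S.filter fun j => σ i ≤ σ j) ⊆ S.filter fun j => σ x ≤ σ j := by
    intro y hy
    rw [Finset.mem_filter] at hy ⊢
    exact ⟨hy.1, le_trans hle hy.2⟩
  have := Finset.card_le_card hsub
  omega

/-- The key comparison lemma. -/
lemma topK_key {σ : ι → ℝ} (hσ : Function.Injective σ) {K Pe J : Finset ι} {k : ℕ}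
    (hJK : J ⊆ K) {i : ι} (hiJ : i ∈ J) (hi : i ∈ topK σ (J ∪ Pe) k)
    (hDJ : topK σ (K ∪ Pe) k ∩ K ⊆ J) : i ∈ topK σ (K ∪ Pe) k := by
  by_contra hc
  have hiKP : i ∈ K ∪ Pe := Finset.mem_union_left _ (hJK hiJ)
  obtain ⟨hcard, hgt⟩ := topK_blocking hσ hiKP hc
  have hsub : topK σ (K ∪ Pe) k ⊆ J ∪ Pe := by
    intro x hx
    rcases Finset.mem_union.1 (topK_subset' _ _ _ hx) with hxK | hxP
    · exact Finset.mem_union_left _ (hDJ (Finset.mem_inter.2 ⟨hx, hxK⟩))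
    · exact Finset.mem_union_right _ hxP
  have hins : insert i (topK σ (K ∪ Pe) k) ⊆ (J ∪ Pe).filter fun j => σ i ≤ σ j := by
    intro x hx
    rcases Finset.mem_insert.1 hx with rfl | hx
    · exact Finset.mem_filter.2 ⟨Finset.mem_union_left _ hiJ, le_refl _⟩
    · exact Finset.mem_filter.2 ⟨hsub hx, (hgt x hx).le⟩
  have hnotin : i ∉ topK σ (K ∪ Pe) k := hc
  have hcard2 : k + 1 ≤ ((J ∪ Pe).filter fun j => σ i ≤ σ j).card := by
    calc k + 1 = (insert i (topK σ (K ∪ Pe) k)).card := by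
          rw [Finset.card_insert_of_notMem hnotin, hcard]
      _ ≤ _ := Finset.card_le_card hins
  have := (mem_topK.1 hi).2
  omega

lemma mem_aggC {C : Finset ι → Option R → Finset ι} {I : Finset ι} {j : ι} :
    j ∈ aggC C I ↔ ∃ v, j ∈ C I v := by simp [aggC]

lemma OA_none (σ : ι → ℝ) (q : Option R → ℕ) (elig : R → Finset ι) (I : Finset ι) :
    OA σ q elig I none = topK σ I (q none) := rfl

lemma OA_some (σ : ι → ℝ) (q : Option R → ℕ) (elig : R → Finset ι) (I : Finset ι) (c : R) :
    OA σ q elig I (some c) =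
      topK σ ((I \ topK σ I (q none)) ∩ elig c) (q (some c)) := rfl

lemma mem_aggOA_iff {σ : ι → ℝ} {q : Option R → ℕ} {ρ : ι → Finset R} {I : Finset ι} {j : ι} :
    j ∈ aggOA σ q ρ I ↔ j ∈ topK σ I (q none) ∨
      ∃ c : R, j ∈ topK σ ((I \ topK σ I (q none)) ∩ eligρ ρ c) (q (some c)) := by
  unfold aggOA
  rw [mem_aggC]
  constructor
  · rintro ⟨u, hu⟩
    rcases u with _ | c
    · rw [OA_none] at hu; exact Or.inl hu
    · rw [OA_some] at hu; exact Or.inr ⟨c, hu⟩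
  · rintro (h | ⟨c, h⟩)
    · exact ⟨none, by rw [OA_none]; exact h⟩
    · exact ⟨some c, by rw [OA_some]; exact h⟩

lemma mem_eligρ {ρ : ι → Finset R} {c : R} {i : ι} : i ∈ eligρ ρ c ↔ c ∈ ρ i := by
  simp [eligρ]

lemma eligρ_star_ne {ρ : ι → Finset R} {e c : R} {JJ : Finset ι} (hc : c ≠ e) :
    eligρ (ρstar ρ e JJ) c = eligρ ρ c := by
  ext i
  simp only [mem_eligρ, ρstar]
  by_cases h : i ∈ JJ <;> simp [h, Finset.mem_insert, hc]

lemma eligρ_star_e {ρ : ι → Finset R} {e : R} {JJ : Finset ι} :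
    eligρ (ρstar ρ e JJ) e = JJ ∪ eligρ ρ e := by
  ext i
  simp only [mem_eligρ, ρstar, Finset.mem_union]
  by_cases h : i ∈ JJ <;> simp [h]

lemma eligρ_upd_ne {ρ : ι → Finset R} {e c : R} {J : Finset ι} (hc : c ≠ e) :
    eligρ (updProf ρ e J) c = eligρ ρ c \ J := by
  ext i
  simp only [mem_eligρ, updProf, Finset.mem_sdiff]
  by_cases h : i ∈ J <;> simp [h, hc]

lemma eligρ_upd_e {ρ : ι → Finset R} {e : R} {J : Finset ι} :
    eligρ (updProf ρ e J) e = J ∪ eligρ ρ e := by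
  ext i
  simp only [mem_eligρ, updProf, Finset.mem_union]
  by_cases h : i ∈ J <;> simp [h]

lemma seqAssign_not_mem (σ : ι → ℝ) (q : Option R → ℕ) (elig : R → Finset ι) :
    ∀ (order : List (Option R)) (I : Finset ι) (u : Option R), u ∉ order →
    seqAssign σ q elig order I u = ∅ := by
  intro order
  induction order with
  | nil => intro I u _; rfl
  | cons v rest ih =>
    intro I u hu
    rw [List.mem_cons, not_or] at hu
    show (if u = v then _ else _) = _
    rw [if_neg hu.1]
    exact ih _ _ hu.2

lemma biUnion_ite (v : Option R) (A : Finset ι) (g : Option R → Finset ι) (hg : g v = ∅) :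
    (Finset.univ.biUnion fun u => if u = v then A else g u) = A ∪ Finset.univ.biUnion g := by
  ext x
  simp only [Finset.mem_biUnion, Finset.mem_union, Finset.mem_univ, true_and]
  constructor
  · rintro ⟨u, hu⟩
    by_cases h : u = v
    · subst h; rw [if_pos rfl] at hu; exact Or.inl hu
    · rw [if_neg h] at hu; exact Or.inr ⟨u, hu⟩
  · rintro (h | ⟨u, hu⟩)
    · exact ⟨v, by rw [if_pos rfl]; exact h⟩
    · by_cases h : u = v
      · subst h; rw [hg] at hu; exact absurd hu (Finset.notMem_empty x)
      · exact ⟨u, by rw [if_neg h]; exact hu⟩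

lemma seq_cats (σ : ι → ℝ) (q : Option R → ℕ) (elig : R → Finset ι) (e : R) :
    ∀ (M : List R), M.Nodup → e ∉ M →
    (∀ c ∈ M, ∀ c' ∈ M, c ≠ c' → Disjoint (elig c) (elig c')) →
    ∀ I₁ : Finset ι,
    Finset.univ.biUnion (seqAssign σ q elig (M.map some ++ [some e]) I₁) =
      (M.toFinset.biUnion fun c => topK σ (I₁ ∩ elig c) (q (some c))) ∪
      topK σ ((I₁ \ M.toFinset.biUnion fun c => topK σ (I₁ ∩ elig c) (q (some c))) ∩ elig e)
        (q (some e)) := by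
  intro M
  induction M with
  | nil =>
    intro _ _ _ I₁
    have : ∀ u, seqAssign σ q elig ([] ++ [some e]) I₁ u =
        if u = some e then topK σ (I₁ ∩ elig e) (q (some e)) else (∅ : Finset ι) := by
      intro u
      show (if u = some e then _ else _) = _
      by_cases h : u = some e
      · rw [if_pos h, if_pos h]; rfl
      · rw [if_neg h, if_neg h]; rfl
    rw [show (([] : List R).map some ++ [some e]) = [] ++ [some e] from rfl]
    rw [Finset.biUnion_congr rfl (fun u _ => this u)]
    rw [biUnion_ite _ _ (fun _ => ∅) rfl]
    simp
  | cons c M' ih =>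
    intro hnd hne hdisj I₁
    rw [List.nodup_cons] at hnd
    rw [List.mem_cons, not_or] at hne
    set ch := topK σ (I₁ ∩ elig c) (q (some c)) with hch
    have hstep : ∀ u, seqAssign σ q elig ((c :: M').map some ++ [some e]) I₁ u =
        if u = some c then ch
        else seqAssign σ q elig (M'.map some ++ [some e]) (I₁ \ ch) u := by
      intro u; rfl
    rw [Finset.biUnion_congr rfl (fun u _ => hstep u)]
    have hnm : (some c : Option R) ∉ M'.map some ++ [some e] := by
      intro h
      rcases List.mem_append.1 h with h | h
      · obtain ⟨c', hc', hcc⟩ := List.mem_map.1 h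
        cases Option.some_inj.1 hcc
        exact hnd.1 hc'
      · rw [List.mem_singleton, Option.some_inj] at h
        exact hne.1 h.symm
    rw [biUnion_ite (some c) ch _ (seqAssign_not_mem σ q elig _ _ _ hnm)]
    rw [ih hnd.2 hne.2 (fun a ha b hb hab => hdisj a (List.mem_cons_of_mem _ ha)
      b (List.mem_cons_of_mem _ hb) hab) (I₁ \ ch)]
    have hch_sub : ch ⊆ elig c := fun x hx =>
      (Finset.mem_inter.1 (topK_subset' _ _ _ hx)).2
    have hrw : ∀ c' ∈ M'.toFinset, topK σ ((I₁ \ ch) ∩ elig c') (q (some c')) =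
        topK σ (I₁ ∩ elig c') (q (some c')) := by
      intro c' hc'
      rw [List.mem_toFinset] at hc'
      have hcc' : c ≠ c' := fun h => hnd.1 (h ▸ hc')
      have hd : Disjoint ch (elig c') :=
        Finset.disjoint_of_subset_left hch_sub
          (hdisj c List.mem_cons_self c' (List.mem_cons_of_mem _ hc') hcc')
      congr 1
      ext x
      simp only [Finset.mem_inter, Finset.mem_sdiff]
      constructor
      · rintro ⟨⟨h1, _⟩, h3⟩; exact ⟨h1, h3⟩
      · rintro ⟨h1, h3⟩
        exact ⟨⟨h1, fun hx => Finset.disjoint_left.1 hd hx h3⟩, h3⟩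
    have hB : (M'.toFinset.biUnion fun c' => topK σ ((I₁ \ ch) ∩ elig c') (q (some c'))) =
        M'.toFinset.biUnion fun c' => topK σ (I₁ ∩ elig c') (q (some c')) :=
      Finset.biUnion_congr rfl hrw
    rw [hB]
    have htf : (c :: M').toFinset = insert c M'.toFinset := List.toFinset_cons
    rw [htf, Finset.biUnion_insert]
    have hsd : (I₁ \ ch) \ (M'.toFinset.biUnion fun c' => topK σ (I₁ ∩ elig c') (q (some c'))) =
        I₁ \ (ch ∪ M'.toFinset.biUnion fun c' => topK σ (I₁ ∩ elig c') (q (some c'))) := by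
      ext x
      simp only [Finset.mem_sdiff, Finset.mem_union, not_or]
      tauto
    rw [hsd, Finset.union_assoc]
/-- the individuals chosen by the EWS-last sequential rule under `ρ*` but not
by the Over-and-Above rule under `ρ̊` form exactly the unique maximal set of individuals who
suffer from a violation of the Equality Code under the Over-and-Above rule with `ρ̊`. -/
theorem ewsLast_diff_eq_maximal_suffers (σ : ι → ℝ) (hσ : Function.Injective σ)
    (q : Option R → ℕ) (ρ : ι → Finset R) (hρ : ∀ i, (ρ i).card ≤ 1) (e : R)
    (JJ : Finset ι) (hJJ : ∀ j ∈ JJ, (ρ j).Nonempty ∧ e ∉ ρ j)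
    (L : List R) (hLnd : L.Nodup) (heL : e ∉ L) (hLall : ∀ c : R, c ≠ e → c ∈ L) :
    ∀ I : Finset ι,
      MaximalSuffers σ q ρ e JJ I
        (aggSeq σ q (ρstar ρ e JJ) (ewsLastOrder e L) I \ aggOA σ q ρ I) ∧
      ∀ J : Finset ι, MaximalSuffers σ q ρ e JJ I J →
        J = aggSeq σ q (ρstar ρ e JJ) (ewsLastOrder e L) I \ aggOA σ q ρ I := by
  intro I
  -- disjointness of VR eligibility sets
  have hdisjρ : ∀ c c' : R, c ≠ c' → Disjoint (eligρ ρ c) (eligρ ρ c') := by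
    intro c c' hcc
    rw [Finset.disjoint_left]
    intro i hi hi'
    rw [mem_eligρ] at hi hi'
    have hsub : ({c, c'} : Finset R) ⊆ ρ i := by
      intro x hx
      rcases Finset.mem_insert.1 hx with rfl | hx
      · exact hi
      · rw [Finset.mem_singleton] at hx; subst hx; exact hi'
    have h2 : ({c, c'} : Finset R).card = 2 := Finset.card_pair hcc
    have hle := Finset.card_le_card hsub
    have := hρ i
    omega
  -- abbreviations
  set Op := topK σ I (q none) with hOp
  set A := aggOA σ q ρ I with hA
  set Pe := (I \ Op) ∩ eligρ ρ e with hPe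
  set K := (JJ ∩ I) \ A with hK
  set k := q (some e) with hk
  set Cats := L.toFinset.biUnion (fun c => topK σ ((I \ Op) ∩ eligρ ρ c) (q (some c)))
    with hCats
  set D := topK σ (K ∪ Pe) k ∩ K with hD
  -- basic facts
  have hOp_subA : Op ⊆ A := fun x hx => mem_aggOA_iff.2 (Or.inl hx)
  have hCats_subA : Cats ⊆ A := by
    intro x hx
    rw [hCats] at hx
    obtain ⟨c, _, hc⟩ := Finset.mem_biUnion.1 hx
    exact mem_aggOA_iff.2 (Or.inr ⟨c, hc⟩)
  have hJJe : ∀ j ∈ JJ, j ∉ eligρ ρ e := fun j hj hje => (hJJ j hj).2 (mem_eligρ.1 hje)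
  have hCatsEe : ∀ x ∈ Cats, x ∉ eligρ ρ e := by
    intro x hx hxe
    rw [hCats] at hx
    obtain ⟨c, hcL, hc⟩ := Finset.mem_biUnion.1 hx
    rw [List.mem_toFinset] at hcL
    have hce : c ≠ e := fun h => heL (h ▸ hcL)
    have : x ∈ eligρ ρ c := (Finset.mem_inter.1 (topK_subset' _ _ _ hc)).2
    exact Finset.disjoint_left.1 (hdisjρ c e hce) this hxe
  have hKmem : ∀ x, x ∈ K ↔ (x ∈ JJ ∧ x ∈ I) ∧ x ∉ A := by
    intro x
    rw [hK, Finset.mem_sdiff, Finset.mem_inter]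
  have hKJJ : ∀ x ∈ K, x ∈ JJ := fun x hx => ((hKmem x).1 hx).1.1
  have hKI : ∀ x ∈ K, x ∈ I := fun x hx => ((hKmem x).1 hx).1.2
  have hKA : ∀ x ∈ K, x ∉ A := fun x hx => ((hKmem x).1 hx).2
  -- structure of aggOA
  have hAeq : A = Op ∪ Cats ∪ topK σ Pe k := by
    ext x
    rw [hA]
    rw [show x ∈ aggOA σ q ρ I ↔ _ from mem_aggOA_iff]
    simp only [Finset.mem_union, hCats, Finset.mem_biUnion, List.mem_toFinset]
    constructor
    · rintro (h | ⟨c, hc⟩)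
      · exact Or.inl (Or.inl h)
      · by_cases hce : c = e
        · subst hce
          exact Or.inr hc
        · exact Or.inl (Or.inr ⟨c, hLall c hce, hc⟩)
    · rintro ((h | ⟨c, _, hc⟩) | h)
      · exact Or.inl h
      · exact Or.inr ⟨c, hc⟩
      · exact Or.inr ⟨e, h⟩
  -- structure of aggSeq
  have hSeq : aggSeq σ q (ρstar ρ e JJ) (ewsLastOrder e L) I =
      Op ∪ (Cats ∪ topK σ (K ∪ Pe) k) := by
    have hnone : (none : Option R) ∉ L.map some ++ [some e] := by simp
    have hdisjstar : ∀ c ∈ L, ∀ c' ∈ L, c ≠ c' →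
        Disjoint (eligρ (ρstar ρ e JJ) c) (eligρ (ρstar ρ e JJ) c') := by
      intro c hc c' hc' hcc
      rw [eligρ_star_ne (show c ≠ e from fun h => heL (h ▸ hc)), eligρ_star_ne (show c' ≠ e from fun h => heL (h ▸ hc'))]
      exact hdisjρ c c' hcc
    have hstep : aggSeq σ q (ρstar ρ e JJ) (ewsLastOrder e L) I =
        Finset.univ.biUnion (fun u => if u = (none : Option R) then
          topK σ (I ∩ eligOf (eligρ (ρstar ρ e JJ)) none) (q none)
        else seqAssign σ q (eligρ (ρstar ρ e JJ)) (L.map some ++ [some e])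
          (I \ topK σ (I ∩ eligOf (eligρ (ρstar ρ e JJ)) none) (q none)) u) := rfl
    have h0 : topK σ (I ∩ eligOf (eligρ (ρstar ρ e JJ)) none) (q none) = Op := by
      rw [hOp]
      congr 1
      exact Finset.inter_univ I
    rw [hstep, h0, biUnion_ite _ _ _ (seqAssign_not_mem _ _ _ _ _ _ hnone)]
    rw [seq_cats σ q (eligρ (ρstar ρ e JJ)) e L hLnd heL hdisjstar (I \ Op)]
    have hBrw : (L.toFinset.biUnion fun c =>
        topK σ ((I \ Op) ∩ eligρ (ρstar ρ e JJ) c) (q (some c))) = Cats := by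
      rw [hCats]
      apply Finset.biUnion_congr rfl
      intro c hc
      rw [List.mem_toFinset] at hc
      rw [eligρ_star_ne (show c ≠ e from fun h => heL (h ▸ hc))]
    rw [hBrw, eligρ_star_e]
    have hKPe : ((I \ Op) \ Cats) ∩ (JJ ∪ eligρ ρ e) = K ∪ Pe := by
      ext x
      rw [Finset.mem_inter, Finset.mem_sdiff, Finset.mem_sdiff, Finset.mem_union,
        Finset.mem_union]
      constructor
      · rintro ⟨⟨⟨hxI, hxOp⟩, hxC⟩, hJE⟩
        rcases hJE with hxJJ | hxE
        · left
          rw [hKmem]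
          refine ⟨⟨hxJJ, hxI⟩, ?_⟩
          rw [hAeq, Finset.mem_union, Finset.mem_union]
          push_neg
          refine ⟨⟨hxOp, hxC⟩, fun hxT => ?_⟩
          have hmem := topK_subset' σ Pe k hxT
          rw [hPe, Finset.mem_inter] at hmem
          exact hJJe x hxJJ hmem.2
        · right
          rw [hPe, Finset.mem_inter, Finset.mem_sdiff]
          exact ⟨⟨hxI, hxOp⟩, hxE⟩
      · rintro (hxK | hxPe)
        · have h1 := hKJJ x hxK
          have h2 := hKI x hxK
          have h3 := hKA x hxK
          have hxOp : x ∉ Op := fun h => h3 (hOp_subA h)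
          have hxC : x ∉ Cats := fun h => h3 (hCats_subA h)
          exact ⟨⟨⟨h2, hxOp⟩, hxC⟩, Or.inl h1⟩
        · rw [hPe, Finset.mem_inter, Finset.mem_sdiff] at hxPe
          obtain ⟨⟨hxI, hxOp⟩, hxE⟩ := hxPe
          exact ⟨⟨⟨hxI, hxOp⟩, fun h => hCatsEe x h hxE⟩, Or.inr hxE⟩
    rw [hKPe, hk]
  -- the basic difference identity
  have hdiff : aggSeq σ q (ρstar ρ e JJ) (ewsLastOrder e L) I \ A = D := by
    rw [hSeq, hD]
    ext x
    simp only [Finset.mem_sdiff, Finset.mem_union, Finset.mem_inter]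
    constructor
    · rintro ⟨hin, hxA⟩
      have hxT : x ∈ topK σ (K ∪ Pe) k := by
        rcases hin with h | h | h
        · exact absurd (hOp_subA h) hxA
        · exact absurd (hCats_subA h) hxA
        · exact h
      refine ⟨hxT, ?_⟩
      rcases Finset.mem_union.1 (topK_subset' _ _ _ hxT) with h | h
      · exact h
      · exfalso
        apply hxA
        rw [hAeq]
        exact Finset.mem_union_right _ (topK_mono Finset.subset_union_right h hxT)
    · rintro ⟨hxT, hxK⟩
      exact ⟨Or.inr (Or.inr hxT), hKA x hxK⟩
  -- membership in aggOA under updated profiles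
  have hupd : ∀ J : Finset ι, J ⊆ K → ∀ j ∈ J,
      (j ∈ aggOA σ q (updProf ρ e J) I ↔ j ∈ topK σ (J ∪ Pe) k) := by
    intro J hJK j hj
    have hjA : j ∉ A := hKA j (hJK hj)
    have hJIOp : J ⊆ I \ Op := by
      intro x hx
      rw [Finset.mem_sdiff]
      exact ⟨hKI x (hJK hx), fun h => hKA x (hJK hx) (hOp_subA h)⟩
    have hpool : (I \ topK σ I (q none)) ∩ eligρ (updProf ρ e J) e = J ∪ Pe := by
      rw [eligρ_upd_e, ← hOp]
      ext x
      rw [Finset.mem_inter, Finset.mem_union, Finset.mem_union, hPe, Finset.mem_inter]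
      constructor
      · rintro ⟨hxIOp, hxJ | hxE⟩
        · exact Or.inl hxJ
        · exact Or.inr ⟨hxIOp, hxE⟩
      · rintro (hxJ | ⟨hxIOp, hxE⟩)
        · exact ⟨hJIOp hxJ, Or.inl hxJ⟩
        · exact ⟨hxIOp, Or.inr hxE⟩
    rw [hk]
    constructor
    · intro h
      rcases mem_aggOA_iff.1 h with h0 | ⟨c, hc⟩
      · exact absurd (hOp_subA (by rw [hOp]; exact h0)) hjA
      · by_cases hce : c = e
        · subst hce
          rwa [hpool] at hc
        · exfalso
          have hmem := (Finset.mem_inter.1 (topK_subset' _ _ _ hc)).2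
          rw [eligρ_upd_ne hce, Finset.mem_sdiff] at hmem
          exact hmem.2 hj
    · intro h
      apply mem_aggOA_iff.2
      refine Or.inr ⟨e, ?_⟩
      rw [hpool]
      exact h
  -- D is contained in K
  have hDK : D ⊆ K := fun x hx => (Finset.mem_inter.1 hx).2
  have hDtop : ∀ x ∈ D, x ∈ topK σ (K ∪ Pe) k := fun x hx => (Finset.mem_inter.1 hx).1
  -- Suffering characterization for subsets of K
  have hSuf : ∀ J : Finset ι, J ⊆ K →
      (Suffers σ q ρ e JJ I J ↔ ∀ j ∈ J, j ∈ topK σ (J ∪ Pe) k) := by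
    intro J hJK
    constructor
    · intro hS j hj
      exact (hupd J hJK j hj).1 ((hS.2 j hj).2)
    · intro h
      refine ⟨fun x hx => Finset.mem_inter.2 ⟨hKJJ x (hJK hx), hKI x (hJK hx)⟩, ?_⟩
      intro j hj
      exact ⟨hKA j (hJK hj), (hupd J hJK j hj).2 (h j hj)⟩
  rw [hdiff]
  -- main goal
  constructor
  · refine ⟨?_, ?_, ?_⟩
    · -- D ⊆ (JJ ∩ I) \ A
      intro x hx
      rw [← hK]
      exact hDK hx
    · -- Suffers D
      rw [hSuf D hDK]
      intro j hj
      exact topK_mono (Finset.union_subset_union_left (hDK)) 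
        (Finset.mem_union_left _ hj) (hDtop j hj)
    · -- maximality
      intro J' hJ'sub hJ'ss
      rw [← hK] at hJ'sub
      have hDJ' : D ⊆ J' := hJ'ss.1
      constructor
      · -- ¬ Suffers J'
        rw [hSuf J' hJ'sub]
        intro hall
        obtain ⟨j, hjJ', hjD⟩ := Finset.exists_of_ssubset hJ'ss
        apply hjD
        rw [hD, Finset.mem_inter]
        exact ⟨topK_key hσ hJ'sub hjJ' (hall j hjJ') (by rw [← hD]; exact hDJ'),
          hJ'sub hjJ'⟩
      · -- D ⊆ aggOA (upd J')
        intro j hj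
        rw [hupd J' hJ'sub j (hDJ' hj)]
        exact topK_mono (Finset.union_subset_union_left hJ'sub)
          (Finset.mem_union_left _ (hDJ' hj)) (hDtop j hj)
  · -- uniqueness
    intro J hJ
    obtain ⟨hJsub, hJS, hJmax⟩ := hJ
    rw [← hK] at hJsub
    have hDsubJ : D ⊆ J := by
      by_contra hnsub
      have hJss : J ⊂ J ∪ D := by
        refine Finset.ssubset_iff_of_subset Finset.subset_union_left |>.2 ?_
        obtain ⟨x, hxD, hxJ⟩ := Set.not_subset.1 (by
          intro h
          exact hnsub (fun y hy => h hy))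
        exact ⟨x, Finset.mem_union_right _ hxD, hxJ⟩
      have hJDK : J ∪ D ⊆ (JJ ∩ I) \ A := by
        rw [← hK]
        exact Finset.union_subset hJsub hDK
      obtain ⟨hnS, hJin⟩ := hJmax (J ∪ D) (by rw [← hK] at hJDK ⊢; exact hJDK) hJss
      apply hnS
      rw [hSuf (J ∪ D) (Finset.union_subset hJsub hDK)]
      intro j hj
      rcases Finset.mem_union.1 hj with hjJ | hjD
      · exact (hupd (J ∪ D) (Finset.union_subset hJsub hDK) j hj).1 (hJin hjJ)
      · exact topK_mono (Finset.union_subset_union_left (Finset.union_subset hJsub hDK))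
          (Finset.mem_union_left _ hj) (hDtop j hjD)
    have hJsubD : J ⊆ D := by
      intro j hj
      have hjtop : j ∈ topK σ (J ∪ Pe) k := (hSuf J hJsub).1 hJS j hj
      rw [hD, Finset.mem_inter]
      exact ⟨topK_key hσ hJsub hj hjtop (by rw [← hD]; exact hDsubJ), hJsub hj⟩
    exact Finset.Subset.antisymm hJsubD hDsubJ
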